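/- Let H be a Hopf algebra over a field k. The map from L(H^e) to H⊗H sending x⊗y to x_1 ⊗ y·S²(x_2) is an isomorphism of H-(H^e)-bimodules, where L(H^e) is H^e = H⊗H^op viewed as a left H-module via a→(x⊗y) = a_1 x ⊗ y S(a_2) (and right H^e-module by (x⊗y)←(a⊗b) = xa⊗by), and the target H⊗H is a free left H-module via multiplication on the first factor, with right H^e-action (x⊗y)←(a⊗b) = x a_1 ⊗ b y S²(a_2). Its inverse sends x⊗y to x_1 ⊗ y·S(x_2). -/

import Mathlib

set_option synthInstance.maxHeartbeats 400000
set_option maxHeartbeats 1000000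


/- STATEMENT 0: The map L(H^e) → H⊗H, x⊗y ↦ x_1 ⊗ y·S²(x_2), is an isomorphism of
H-(H^e)-bimodules, with inverse x⊗y ↦ x_1 ⊗ y·S(x_2). -/

open TensorProduct

noncomputable section

namespace Stmt0

variable {k : Type} [Field k] {H : Type} [Ring H] [HopfAlgebra k H]

variable (k H) in
/-- the antipode -/
def S : H →ₗ[k] H := HopfAlgebra.antipode k

variable (k H) in
/-- comultiplication -/
def Δ : H →ₗ[k] H ⊗[k] H := Coalgebra.comul

variable (k H) in
/-- multiplication -/
def mm : H ⊗[k] H →ₗ[k] H := LinearMap.mul' k H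

variable (k H) in
def α : (H ⊗[k] H) ⊗[k] H ≃ₗ[k] H ⊗[k] (H ⊗[k] H) := TensorProduct.assoc k H H H

variable (k H) in
def cc : H ⊗[k] H ≃ₗ[k] H ⊗[k] H := TensorProduct.comm k H H

variable (k H) in
def ttc : (H ⊗[k] H) ⊗[k] (H ⊗[k] H) ≃ₗ[k] (H ⊗[k] H) ⊗[k] (H ⊗[k] H) :=
  TensorProduct.tensorTensorTensorComm k H H H H

variable (k H) in
/-- `x ⊗ y ↦ x_1 ⊗ y·S²(x_2)`, the claimed isomorphism. -/
def φ : H ⊗[k] H →ₗ[k] H ⊗[k] H :=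
  (TensorProduct.map LinearMap.id
      (mm k H ∘ₗ TensorProduct.map LinearMap.id (S k H ∘ₗ S k H) ∘ₗ (cc k H).toLinearMap)) ∘ₗ
    (α k H).toLinearMap ∘ₗ TensorProduct.map (Δ k H) LinearMap.id

variable (k H) in
/-- `x ⊗ y ↦ x_1 ⊗ y·S(x_2)`, the claimed inverse. -/
def ψ : H ⊗[k] H →ₗ[k] H ⊗[k] H :=
  (TensorProduct.map LinearMap.id
      (mm k H ∘ₗ TensorProduct.map LinearMap.id (S k H) ∘ₗ (cc k H).toLinearMap)) ∘ₗ
    (α k H).toLinearMap ∘ₗ TensorProduct.map (Δ k H) LinearMap.id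

variable (k H) in
/-- left `H`-action on `L(H^e)`: `a → (x⊗y) = a_1 x ⊗ y S(a_2)`. -/
def lactSrc : H ⊗[k] (H ⊗[k] H) →ₗ[k] H ⊗[k] H :=
  (TensorProduct.map (mm k H)
      (mm k H ∘ₗ TensorProduct.map LinearMap.id (S k H) ∘ₗ (cc k H).toLinearMap)) ∘ₗ
    (ttc k H).toLinearMap ∘ₗ TensorProduct.map (Δ k H) LinearMap.id

variable (k H) in
/-- left `H`-action on the target: left multiplication on the first factor. -/
def lactTgt : H ⊗[k] (H ⊗[k] H) →ₗ[k] H ⊗[k] H :=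
  (TensorProduct.map (mm k H) LinearMap.id) ∘ₗ (α k H).symm.toLinearMap

variable (k H) in
/-- right `H^e`-action on `L(H^e)`: `(x⊗y) ← (a⊗b) = xa ⊗ by`. -/
def ractSrc : (H ⊗[k] H) ⊗[k] (H ⊗[k] H) →ₗ[k] H ⊗[k] H :=
  (TensorProduct.map (mm k H) (mm k H ∘ₗ (cc k H).toLinearMap)) ∘ₗ (ttc k H).toLinearMap

variable (k H) in
/-- right `H^e`-action on the target: `(x⊗y) ← (a⊗b) = x a_1 ⊗ b y S²(a_2)`. -/
def ractTgt : (H ⊗[k] H) ⊗[k] (H ⊗[k] H) →ₗ[k] H ⊗[k] H :=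
  (TensorProduct.map (mm k H)
      (mm k H ∘ₗ
        TensorProduct.map (mm k H ∘ₗ (cc k H).toLinearMap) (S k H ∘ₗ S k H) ∘ₗ
          (α k H).symm.toLinearMap ∘ₗ TensorProduct.map LinearMap.id (cc k H).toLinearMap)) ∘ₗ
    (TensorProduct.tensorTensorTensorComm k H H H (H ⊗[k] H)).toLinearMap ∘ₗ
      TensorProduct.map LinearMap.id
        ((α k H).toLinearMap ∘ₗ TensorProduct.map (Δ k H) LinearMap.id)


section Aux

lemma sum_counit_smul_right {a : H} {ι : Type*} (r : Coalgebra.Repr k a ι) :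
    ∑ i ∈ r.index, Coalgebra.counit (R := k) (r.left i) • r.right i = a := by
  have h2 := congrArg (TensorProduct.lid k H) (Coalgebra.sum_counit_tmul_eq r)
  rw [map_sum] at h2
  simp only [lid_tmul, one_smul] at h2
  exact h2

lemma sum_counit_smul_left {a : H} {ι : Type*} (r : Coalgebra.Repr k a ι) :
    ∑ i ∈ r.index, Coalgebra.counit (R := k) (r.right i) • r.left i = a := by
  have h2 := congrArg (TensorProduct.rid k H) (Coalgebra.sum_tmul_counit_eq r)
  rw [map_sum] at h2
  simp only [rid_tmul, one_smul] at h2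
  exact h2

lemma antipode_one : HopfAlgebra.antipode (R := k) (1 : H) = 1 := by
  have h := HopfAlgebra.mul_antipode_rTensor_comul_apply (R := k) (1 : H)
  rw [Bialgebra.comul_one, Algebra.TensorProduct.one_def] at h
  simpa using h

/-- "M ⋆ G = one" -/
lemma MG {a b : H} {ι κ : Type*} (ra : Coalgebra.Repr k a ι) (rb : Coalgebra.Repr k b κ) :
    ∑ i ∈ ra.index, ∑ j ∈ rb.index,
      (ra.left i * rb.left j) * HopfAlgebra.antipode (R := k) (ra.right i * rb.right j)
      = (Coalgebra.counit (R := k) a * Coalgebra.counit (R := k) b) • (1 : H) := by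
  have key : ∑ i ∈ ra.index, ∑ j ∈ rb.index,
      (ra.left i * rb.left j) ⊗ₜ[k] (ra.right i * rb.right j)
      = Coalgebra.comul (R := k) (a * b) := by
    rw [Bialgebra.comul_mul, ← ra.eq, ← rb.eq, Finset.sum_mul_sum]
    simp [Algebra.TensorProduct.tmul_mul_tmul]
  have h := congrArg (LinearMap.mul' k H ∘ₗ LinearMap.lTensor H (HopfAlgebra.antipode (R := k))) key
  simp only [map_sum, LinearMap.comp_apply, LinearMap.lTensor_tmul, LinearMap.mul'_apply] at h
  rw [h, HopfAlgebra.mul_antipode_lTensor_comul_apply (a * b)]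
  rw [Bialgebra.counit_mul, Algebra.smul_def, map_mul, mul_one]

/-- "F ⋆ M = one" -/
lemma FM {a b : H} {ι κ : Type*} (ra : Coalgebra.Repr k a ι) (rb : Coalgebra.Repr k b κ) :
    ∑ i ∈ ra.index, ∑ j ∈ rb.index,
      (HopfAlgebra.antipode (R := k) (rb.left j) * HopfAlgebra.antipode (R := k) (ra.left i))
        * (ra.right i * rb.right j)
      = (Coalgebra.counit (R := k) a * Coalgebra.counit (R := k) b) • (1 : H) := by
  rw [Finset.sum_comm]
  calc ∑ j ∈ rb.index, ∑ i ∈ ra.index,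
        (HopfAlgebra.antipode (R := k) (rb.left j) * HopfAlgebra.antipode (R := k) (ra.left i))
          * (ra.right i * rb.right j)
      = ∑ j ∈ rb.index, HopfAlgebra.antipode (R := k) (rb.left j) *
          ((∑ i ∈ ra.index, HopfAlgebra.antipode (R := k) (ra.left i) * ra.right i) * rb.right j) := by
        simp only [Finset.sum_mul, Finset.mul_sum]
        refine Finset.sum_congr rfl fun j _ => Finset.sum_congr rfl fun i _ => by noncomm_ring
    _ = (Coalgebra.counit (R := k) a * Coalgebra.counit (R := k) b) • (1 : H) := by
        rw [HopfAlgebra.sum_antipode_mul_eq_smul ra]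
        simp only [smul_mul_assoc, one_mul, mul_smul_comm]
        rw [← Finset.smul_sum, HopfAlgebra.sum_antipode_mul_eq_smul rb]
        rw [smul_smul, mul_comm]


lemma sum_smul_mul {ι ι' : Type*} (s : Finset ι) (t : Finset ι') (c : ι → k) (d : ι' → k)
    (x : ι → H) (y : ι' → H) :
    ∑ i ∈ s, ∑ j ∈ t, (c i * d j) • (x i * y j) = (∑ i ∈ s, c i • x i) * (∑ j ∈ t, d j • y j) := by
  rw [Finset.sum_mul_sum]
  refine Finset.sum_congr rfl fun i _ => Finset.sum_congr rfl fun j _ => ?_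
  rw [smul_mul_assoc, mul_smul_comm, smul_smul]

variable (k H) in
/-- the 6-linear evaluation map for the antipode-antihom proof -/
def Φ2 : (H ⊗[k] (H ⊗[k] H)) ⊗[k] (H ⊗[k] (H ⊗[k] H)) →ₗ[k] H :=
  LinearMap.mul' k H ∘ₗ
    TensorProduct.map
      (LinearMap.mul' k H ∘ₗ
        TensorProduct.map (HopfAlgebra.antipode (R := k)) (HopfAlgebra.antipode (R := k)) ∘ₗ
        (TensorProduct.comm k H H).toLinearMap)
      (LinearMap.mul' k H ∘ₗ
        TensorProduct.map (LinearMap.mul' k H)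
          ((HopfAlgebra.antipode (R := k)) ∘ₗ LinearMap.mul' k H) ∘ₗ
        (TensorProduct.tensorTensorTensorComm k H H H H).toLinearMap) ∘ₗ
    (TensorProduct.tensorTensorTensorComm k H (H ⊗[k] H) H (H ⊗[k] H)).toLinearMap

@[simp] lemma Φ2_apply (u v w x y z : H) :
    Φ2 k H ((u ⊗ₜ (v ⊗ₜ w)) ⊗ₜ (x ⊗ₜ (y ⊗ₜ z))) =
      (HopfAlgebra.antipode (R := k) x * HopfAlgebra.antipode (R := k) u) *
        ((v * y) * HopfAlgebra.antipode (R := k) (w * z)) := by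
  simp [Φ2]

lemma sum_sum_comm4 {M : Type*} [AddCommMonoid M] {ι1 ι2 ι3 ι4 : Type*}
    (s : Finset ι1) (t : Finset ι2) (u : ι1 → Finset ι3) (v : ι2 → Finset ι4)
    (f : ι1 → ι3 → ι2 → ι4 → M) :
    ∑ j ∈ t, ∑ q ∈ v j, ∑ i ∈ s, ∑ p ∈ u i, f i p j q
      = ∑ i ∈ s, ∑ j ∈ t, ∑ p ∈ u i, ∑ q ∈ v j, f i p j q := by
  calc ∑ j ∈ t, ∑ q ∈ v j, ∑ i ∈ s, ∑ p ∈ u i, f i p j q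
      = ∑ j ∈ t, ∑ i ∈ s, ∑ q ∈ v j, ∑ p ∈ u i, f i p j q :=
        Finset.sum_congr rfl fun j _ => Finset.sum_comm
    _ = ∑ i ∈ s, ∑ j ∈ t, ∑ q ∈ v j, ∑ p ∈ u i, f i p j q := Finset.sum_comm
    _ = ∑ i ∈ s, ∑ j ∈ t, ∑ p ∈ u i, ∑ q ∈ v j, f i p j q :=
        Finset.sum_congr rfl fun i _ => Finset.sum_congr rfl fun j _ => Finset.sum_comm

lemma antipode_mul (a b : H) :
    HopfAlgebra.antipode (R := k) (a * b) =
      HopfAlgebra.antipode (R := k) b * HopfAlgebra.antipode (R := k) a := by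
  have ra := Coalgebra.Repr.arbitrary k a
  have rb := Coalgebra.Repr.arbitrary k b
  have r1 : ∀ i, Coalgebra.Repr k (ra.left i) (H × H) := fun i => Coalgebra.Repr.arbitrary k _
  have r2 : ∀ i, Coalgebra.Repr k (ra.right i) (H × H) := fun i => Coalgebra.Repr.arbitrary k _
  have s1 : ∀ j, Coalgebra.Repr k (rb.left j) (H × H) := fun j => Coalgebra.Repr.arbitrary k _
  have s2 : ∀ j, Coalgebra.Repr k (rb.right j) (H × H) := fun j => Coalgebra.Repr.arbitrary k _
  have ka := Coalgebra.sum_tmul_tmul_eq ra r1 r2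
  have kb := Coalgebra.sum_tmul_tmul_eq rb s1 s2
  have main := congrArg₂ (fun s t => Φ2 k H (s ⊗ₜ[k] t)) ka kb
  simp only [sum_tmul, tmul_sum, map_sum, Φ2_apply] at main
  have hL : ∑ j ∈ rb.index, ∑ q ∈ (s1 j).index, ∑ i ∈ ra.index, ∑ p ∈ (r1 i).index,
      (HopfAlgebra.antipode (R := k) ((s1 j).left q) * HopfAlgebra.antipode (R := k) ((r1 i).left p)) *
        (((r1 i).right p * (s1 j).right q) *
          HopfAlgebra.antipode (R := k) (ra.right i * rb.right j))
      = HopfAlgebra.antipode (R := k) (a * b) := by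
    calc _ = ∑ j ∈ rb.index, ∑ i ∈ ra.index, ∑ q ∈ (s1 j).index, ∑ p ∈ (r1 i).index,
        (HopfAlgebra.antipode (R := k) ((s1 j).left q) * HopfAlgebra.antipode (R := k) ((r1 i).left p)) *
          (((r1 i).right p * (s1 j).right q) *
            HopfAlgebra.antipode (R := k) (ra.right i * rb.right j)) :=
          Finset.sum_congr rfl fun j _ => Finset.sum_comm
      _ = ∑ i ∈ ra.index, ∑ j ∈ rb.index, ∑ q ∈ (s1 j).index, ∑ p ∈ (r1 i).index,
        (HopfAlgebra.antipode (R := k) ((s1 j).left q) * HopfAlgebra.antipode (R := k) ((r1 i).left p)) *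
          (((r1 i).right p * (s1 j).right q) *
            HopfAlgebra.antipode (R := k) (ra.right i * rb.right j)) := Finset.sum_comm
      _ = ∑ i ∈ ra.index, ∑ j ∈ rb.index, ∑ p ∈ (r1 i).index, ∑ q ∈ (s1 j).index,
        (HopfAlgebra.antipode (R := k) ((s1 j).left q) * HopfAlgebra.antipode (R := k) ((r1 i).left p)) *
          (((r1 i).right p * (s1 j).right q) *
            HopfAlgebra.antipode (R := k) (ra.right i * rb.right j)) :=
          Finset.sum_congr rfl fun i _ => Finset.sum_congr rfl fun j _ => Finset.sum_comm
      _ = ∑ i ∈ ra.index, ∑ j ∈ rb.index,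
            (Coalgebra.counit (R := k) (ra.left i) * Coalgebra.counit (R := k) (rb.left j)) •
              HopfAlgebra.antipode (R := k) (ra.right i * rb.right j) := by
          refine Finset.sum_congr rfl fun i _ => Finset.sum_congr rfl fun j _ => ?_
          calc ∑ p ∈ (r1 i).index, ∑ q ∈ (s1 j).index, _
              = (∑ p ∈ (r1 i).index, ∑ q ∈ (s1 j).index,
                  (HopfAlgebra.antipode (R := k) ((s1 j).left q) *
                    HopfAlgebra.antipode (R := k) ((r1 i).left p)) *
                    ((r1 i).right p * (s1 j).right q)) *
                  HopfAlgebra.antipode (R := k) (ra.right i * rb.right j) := by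
                rw [Finset.sum_mul]
                refine Finset.sum_congr rfl fun p _ => ?_
                rw [Finset.sum_mul]
                exact Finset.sum_congr rfl fun q _ => (mul_assoc _ _ _).symm
            _ = _ := by rw [FM (r1 i) (s1 j), smul_mul_assoc, one_mul]
      _ = HopfAlgebra.antipode (R := k)
            (∑ i ∈ ra.index, ∑ j ∈ rb.index,
              (Coalgebra.counit (R := k) (ra.left i) * Coalgebra.counit (R := k) (rb.left j)) •
                (ra.right i * rb.right j)) := by
          simp only [map_sum, map_smul]
      _ = HopfAlgebra.antipode (R := k) (a * b) := by
          rw [sum_smul_mul, sum_counit_smul_right ra, sum_counit_smul_right rb]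
  have hR : ∑ j ∈ rb.index, ∑ q ∈ (s2 j).index, ∑ i ∈ ra.index, ∑ p ∈ (r2 i).index,
      (HopfAlgebra.antipode (R := k) (rb.left j) * HopfAlgebra.antipode (R := k) (ra.left i)) *
        (((r2 i).left p * (s2 j).left q) *
          HopfAlgebra.antipode (R := k) ((r2 i).right p * (s2 j).right q))
      = HopfAlgebra.antipode (R := k) b * HopfAlgebra.antipode (R := k) a := by
    calc _ = ∑ j ∈ rb.index, ∑ i ∈ ra.index, ∑ q ∈ (s2 j).index, ∑ p ∈ (r2 i).index,
        (HopfAlgebra.antipode (R := k) (rb.left j) * HopfAlgebra.antipode (R := k) (ra.left i)) *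
          (((r2 i).left p * (s2 j).left q) *
            HopfAlgebra.antipode (R := k) ((r2 i).right p * (s2 j).right q)) :=
          Finset.sum_congr rfl fun j _ => Finset.sum_comm
      _ = ∑ i ∈ ra.index, ∑ j ∈ rb.index, ∑ q ∈ (s2 j).index, ∑ p ∈ (r2 i).index,
        (HopfAlgebra.antipode (R := k) (rb.left j) * HopfAlgebra.antipode (R := k) (ra.left i)) *
          (((r2 i).left p * (s2 j).left q) *
            HopfAlgebra.antipode (R := k) ((r2 i).right p * (s2 j).right q)) := Finset.sum_comm
      _ = ∑ i ∈ ra.index, ∑ j ∈ rb.index, ∑ p ∈ (r2 i).index, ∑ q ∈ (s2 j).index,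
        (HopfAlgebra.antipode (R := k) (rb.left j) * HopfAlgebra.antipode (R := k) (ra.left i)) *
          (((r2 i).left p * (s2 j).left q) *
            HopfAlgebra.antipode (R := k) ((r2 i).right p * (s2 j).right q)) :=
          Finset.sum_congr rfl fun i _ => Finset.sum_congr rfl fun j _ => Finset.sum_comm
      _ = ∑ i ∈ ra.index, ∑ j ∈ rb.index,
            (Coalgebra.counit (R := k) (rb.right j) * Coalgebra.counit (R := k) (ra.right i)) •
              (HopfAlgebra.antipode (R := k) (rb.left j) * HopfAlgebra.antipode (R := k) (ra.left i)) := by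
          refine Finset.sum_congr rfl fun i _ => Finset.sum_congr rfl fun j _ => ?_
          simp only [← Finset.mul_sum]
          rw [show (∑ p ∈ (r2 i).index, ∑ q ∈ (s2 j).index,
            ((r2 i).left p * (s2 j).left q) *
              HopfAlgebra.antipode (R := k) ((r2 i).right p * (s2 j).right q)) = _ from
            MG (r2 i) (s2 j)]
          rw [mul_smul_comm, mul_one, mul_comm (Coalgebra.counit (R := k) (ra.right i))]
      _ = (∑ j ∈ rb.index, Coalgebra.counit (R := k) (rb.right j) •
              HopfAlgebra.antipode (R := k) (rb.left j)) *
          (∑ i ∈ ra.index, Coalgebra.counit (R := k) (ra.right i) •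
              HopfAlgebra.antipode (R := k) (ra.left i)) := by
          rw [Finset.sum_comm, ← sum_smul_mul]
      _ = HopfAlgebra.antipode (R := k) b * HopfAlgebra.antipode (R := k) a := by
          simp only [← map_smul, ← map_sum]
          rw [sum_counit_smul_left rb, sum_counit_smul_left ra]
  rw [hL, hR] at main
  exact main


-- the tmul lemmas
lemma φ_tmul (x y : H) {ι : Type*} (r : Coalgebra.Repr k x ι) :
    φ k H (x ⊗ₜ y) = ∑ i ∈ r.index, r.left i ⊗ₜ (y * S k H (S k H (r.right i))) := by
  have hx : Δ k H x = ∑ i ∈ r.index, r.left i ⊗ₜ[k] r.right i := r.eq.symm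
  simp only [φ, LinearMap.coe_comp, Function.comp_apply, LinearEquiv.coe_coe, map_tmul,
    LinearMap.id_coe, id_eq, hx, sum_tmul, map_sum, assoc_tmul]
  simp [cc, mm, S, α, comm_tmul]

lemma ψ_tmul (x y : H) {ι : Type*} (r : Coalgebra.Repr k x ι) :
    ψ k H (x ⊗ₜ y) = ∑ i ∈ r.index, r.left i ⊗ₜ (y * S k H (r.right i)) := by
  have hx : Δ k H x = ∑ i ∈ r.index, r.left i ⊗ₜ[k] r.right i := r.eq.symm
  simp only [ψ, LinearMap.coe_comp, Function.comp_apply, LinearEquiv.coe_coe, map_tmul,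
    LinearMap.id_coe, id_eq, hx, sum_tmul, map_sum, assoc_tmul]
  simp [cc, mm, S, α, comm_tmul]

lemma lactSrc_tmul (a x y : H) {ι : Type*} (r : Coalgebra.Repr k a ι) :
    lactSrc k H (a ⊗ₜ (x ⊗ₜ y)) =
      ∑ i ∈ r.index, (r.left i * x) ⊗ₜ (y * S k H (r.right i)) := by
  have ha : Δ k H a = ∑ i ∈ r.index, r.left i ⊗ₜ[k] r.right i := r.eq.symm
  simp only [lactSrc, LinearMap.coe_comp, Function.comp_apply, LinearEquiv.coe_coe, map_tmul,
    LinearMap.id_coe, id_eq, ha, sum_tmul, map_sum, ttc]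
  simp [cc, mm, S, comm_tmul, tensorTensorTensorComm_tmul]

lemma lactTgt_tmul (a : H) (u v : H) :
    lactTgt k H (a ⊗ₜ (u ⊗ₜ v)) = (a * u) ⊗ₜ v := by
  simp [lactTgt, α, mm]

lemma ractSrc_tmul (x y a b : H) :
    ractSrc k H ((x ⊗ₜ y) ⊗ₜ (a ⊗ₜ b)) = (x * a) ⊗ₜ (b * y) := by
  simp [ractSrc, ttc, cc, mm]

lemma ractTgt_tmul (u v a b : H) {ι : Type*} (r : Coalgebra.Repr k a ι) :
    ractTgt k H ((u ⊗ₜ v) ⊗ₜ (a ⊗ₜ b)) =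
      ∑ i ∈ r.index, (u * r.left i) ⊗ₜ ((b * v) * S k H (S k H (r.right i))) := by
  have ha : Δ k H a = ∑ i ∈ r.index, r.left i ⊗ₜ[k] r.right i := r.eq.symm
  simp only [ractTgt, LinearMap.coe_comp, Function.comp_apply, LinearEquiv.coe_coe, map_tmul,
    LinearMap.id_coe, id_eq, ha, sum_tmul, map_sum, assoc_tmul, tmul_sum]
  simp [cc, mm, S, α, comm_tmul, tensorTensorTensorComm_tmul]



/-- product representation -/
@[reducible] def reprMul {a b : H} {ι κ : Type*} (ra : Coalgebra.Repr k a ι) (rb : Coalgebra.Repr k b κ) :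
    Coalgebra.Repr k (a * b) (ι × κ) where
  index := ra.index ×ˢ rb.index
  left := fun p => ra.left p.1 * rb.left p.2
  right := fun p => ra.right p.1 * rb.right p.2
  eq := by
    rw [Bialgebra.comul_mul, ← ra.eq, ← rb.eq, Finset.sum_mul_sum]
    rw [Finset.sum_product]
    simp [Algebra.TensorProduct.tmul_mul_tmul]


lemma S_mul (a b : H) : S k H (a * b) = S k H b * S k H a := antipode_mul a b
lemma S_one : S k H (1 : H) = 1 := antipode_one

/-- `∑ a₁ ⊗ S²(a₃) S(a₂) = a ⊗ 1` -/
lemma E1 {a : H} {ι : Type*} (ra : Coalgebra.Repr k a ι) (r1 : ∀ i, Coalgebra.Repr k (ra.left i) (H × H))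
    (r2 : ∀ i, Coalgebra.Repr k (ra.right i) (H × H)) :
    ∑ i ∈ ra.index, ∑ p ∈ (r1 i).index,
      (r1 i).left p ⊗ₜ[k] (S k H (S k H (ra.right i)) * S k H ((r1 i).right p))
      = a ⊗ₜ[k] (1 : H) := by
  have key := Coalgebra.sum_tmul_tmul_eq ra r1 r2
  have h := congrArg (LinearMap.lTensor H
    (mm k H ∘ₗ TensorProduct.map (S k H ∘ₗ S k H) (S k H) ∘ₗ (cc k H).toLinearMap)) key
  simp only [map_sum, LinearMap.lTensor_tmul, LinearMap.coe_comp, Function.comp_apply,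
    LinearEquiv.coe_coe, cc, comm_tmul, map_tmul, mm, LinearMap.mul'_apply] at h
  rw [h]
  calc ∑ i ∈ ra.index, ∑ p ∈ (r2 i).index,
        ra.left i ⊗ₜ[k] (S k H (S k H ((r2 i).right p)) * S k H ((r2 i).left p))
      = ∑ i ∈ ra.index,
          ra.left i ⊗ₜ[k] (S k H (∑ p ∈ (r2 i).index,
            (r2 i).left p * HopfAlgebra.antipode (R := k) ((r2 i).right p))) := by
        refine Finset.sum_congr rfl fun i _ => ?_
        rw [map_sum, tmul_sum]
        refine Finset.sum_congr rfl fun p _ => ?_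
        rw [S_mul]
        rfl
    _ = ∑ i ∈ ra.index, Coalgebra.counit (R := k) (ra.right i) • (ra.left i ⊗ₜ[k] (1 : H)) := by
        refine Finset.sum_congr rfl fun i _ => ?_
        rw [HopfAlgebra.sum_mul_antipode_eq_smul (r2 i), map_smul, S_one, tmul_smul]
    _ = a ⊗ₜ[k] (1 : H) := by
        simp only [smul_tmul']
        rw [← sum_tmul, sum_counit_smul_left ra]


/-- `∑ a₁ ⊗ S(a₃) S²(a₂) = a ⊗ 1` -/
lemma E3 {a : H} {ι : Type*} (ra : Coalgebra.Repr k a ι) (r1 : ∀ i, Coalgebra.Repr k (ra.left i) (H × H))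
    (r2 : ∀ i, Coalgebra.Repr k (ra.right i) (H × H)) :
    ∑ i ∈ ra.index, ∑ p ∈ (r1 i).index,
      (r1 i).left p ⊗ₜ[k] (S k H (ra.right i) * S k H (S k H ((r1 i).right p)))
      = a ⊗ₜ[k] (1 : H) := by
  have key := Coalgebra.sum_tmul_tmul_eq ra r1 r2
  have h := congrArg (LinearMap.lTensor H
    (mm k H ∘ₗ TensorProduct.map (S k H) (S k H ∘ₗ S k H) ∘ₗ (cc k H).toLinearMap)) key
  simp only [map_sum, LinearMap.lTensor_tmul, LinearMap.coe_comp, Function.comp_apply,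
    LinearEquiv.coe_coe, cc, comm_tmul, map_tmul, mm, LinearMap.mul'_apply] at h
  rw [h]
  calc ∑ i ∈ ra.index, ∑ p ∈ (r2 i).index,
        ra.left i ⊗ₜ[k] (S k H ((r2 i).right p) * S k H (S k H ((r2 i).left p)))
      = ∑ i ∈ ra.index,
          ra.left i ⊗ₜ[k] (S k H (∑ p ∈ (r2 i).index,
            HopfAlgebra.antipode (R := k) ((r2 i).left p) * (r2 i).right p)) := by
        refine Finset.sum_congr rfl fun i _ => ?_
        rw [map_sum, tmul_sum]
        refine Finset.sum_congr rfl fun p _ => ?_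
        rw [S_mul]
        rfl
    _ = ∑ i ∈ ra.index, Coalgebra.counit (R := k) (ra.right i) • (ra.left i ⊗ₜ[k] (1 : H)) := by
        refine Finset.sum_congr rfl fun i _ => ?_
        rw [HopfAlgebra.sum_antipode_mul_eq_smul (r2 i), map_smul, S_one, tmul_smul]
    _ = a ⊗ₜ[k] (1 : H) := by
        simp only [smul_tmul']
        rw [← sum_tmul, sum_counit_smul_left ra]

lemma part1a : ψ k H ∘ₗ φ k H = LinearMap.id (R := k) (M := H ⊗[k] H) := by
  apply TensorProduct.ext'
  intro x y
  have ra := Coalgebra.Repr.arbitrary k x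
  have r1 : ∀ i, Coalgebra.Repr k (ra.left i) (H × H) := fun i => Coalgebra.Repr.arbitrary k _
  have r2 : ∀ i, Coalgebra.Repr k (ra.right i) (H × H) := fun i => Coalgebra.Repr.arbitrary k _
  have h := congrArg (LinearMap.lTensor H (LinearMap.mulLeft k y)) (E1 ra r1 r2)
  simp only [map_sum, LinearMap.lTensor_tmul, LinearMap.mulLeft_apply, mul_one] at h
  calc (ψ k H ∘ₗ φ k H) (x ⊗ₜ[k] y) = ψ k H (φ k H (x ⊗ₜ[k] y)) := rfl
    _ = ∑ i ∈ ra.index, ψ k H (ra.left i ⊗ₜ (y * S k H (S k H (ra.right i)))) := by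
        rw [φ_tmul x y ra, map_sum]
    _ = ∑ i ∈ ra.index, ∑ p ∈ (r1 i).index,
          (r1 i).left p ⊗ₜ[k]
            (y * (S k H (S k H (ra.right i)) * S k H ((r1 i).right p))) := by
        refine Finset.sum_congr rfl fun i _ => ?_
        rw [ψ_tmul _ _ (r1 i)]
        exact Finset.sum_congr rfl fun p _ => by rw [mul_assoc]
    _ = x ⊗ₜ[k] y := by rw [h]

lemma part1b : φ k H ∘ₗ ψ k H = LinearMap.id (R := k) (M := H ⊗[k] H) := by
  apply TensorProduct.ext'
  intro x y
  have ra := Coalgebra.Repr.arbitrary k x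
  have r1 : ∀ i, Coalgebra.Repr k (ra.left i) (H × H) := fun i => Coalgebra.Repr.arbitrary k _
  have r2 : ∀ i, Coalgebra.Repr k (ra.right i) (H × H) := fun i => Coalgebra.Repr.arbitrary k _
  have h := congrArg (LinearMap.lTensor H (LinearMap.mulLeft k y)) (E3 ra r1 r2)
  simp only [map_sum, LinearMap.lTensor_tmul, LinearMap.mulLeft_apply, mul_one] at h
  calc (φ k H ∘ₗ ψ k H) (x ⊗ₜ[k] y) = φ k H (ψ k H (x ⊗ₜ[k] y)) := rfl
    _ = ∑ i ∈ ra.index, φ k H (ra.left i ⊗ₜ (y * S k H (ra.right i))) := by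
        rw [ψ_tmul x y ra, map_sum]
    _ = ∑ i ∈ ra.index, ∑ p ∈ (r1 i).index,
          (r1 i).left p ⊗ₜ[k]
            (y * (S k H (ra.right i) * S k H (S k H ((r1 i).right p)))) := by
        refine Finset.sum_congr rfl fun i _ => ?_
        rw [φ_tmul _ _ (r1 i)]
        exact Finset.sum_congr rfl fun p _ => by rw [mul_assoc]
    _ = x ⊗ₜ[k] y := by rw [h]


lemma part2 (a : H) (m : H ⊗[k] H) :
    φ k H (lactSrc k H (a ⊗ₜ m)) = lactTgt k H (a ⊗ₜ φ k H m) := by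
  induction m using TensorProduct.induction_on with
  | zero => simp [tmul_zero]
  | add u v hu hv => simp only [tmul_add, map_add] at hu hv ⊢; rw [hu, hv]
  | tmul x y =>
    have ra := Coalgebra.Repr.arbitrary k a
    have r1 : ∀ i, Coalgebra.Repr k (ra.left i) (H × H) := fun i => Coalgebra.Repr.arbitrary k _
    have r2 : ∀ i, Coalgebra.Repr k (ra.right i) (H × H) := fun i => Coalgebra.Repr.arbitrary k _
    have rx := Coalgebra.Repr.arbitrary k x
    -- right-hand side
    have hrhs : lactTgt k H (a ⊗ₜ φ k H (x ⊗ₜ y)) =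
        ∑ q ∈ rx.index, (a * rx.left q) ⊗ₜ[k] (y * S k H (S k H (rx.right q))) := by
      rw [φ_tmul x y rx, tmul_sum, map_sum]
      exact Finset.sum_congr rfl fun q _ => lactTgt_tmul _ _ _
    rw [hrhs]
    -- left-hand side
    rw [lactSrc_tmul a x y ra, map_sum]
    calc ∑ i ∈ ra.index, φ k H ((ra.left i * x) ⊗ₜ (y * S k H (ra.right i)))
        = ∑ i ∈ ra.index, ∑ p ∈ (r1 i).index, ∑ q ∈ rx.index,
            ((r1 i).left p * rx.left q) ⊗ₜ[k]
              ((y * S k H (ra.right i)) *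
                S k H (S k H ((r1 i).right p * rx.right q))) := by
          refine Finset.sum_congr rfl fun i _ => ?_
          rw [φ_tmul _ _ (reprMul (r1 i) rx)]
          rw [show (reprMul (r1 i) rx).index = (r1 i).index ×ˢ rx.index from rfl,
            Finset.sum_product]
      _ = ∑ q ∈ rx.index, ∑ i ∈ ra.index, ∑ p ∈ (r1 i).index,
            ((r1 i).left p * rx.left q) ⊗ₜ[k]
              (y * ((S k H (ra.right i) * S k H (S k H ((r1 i).right p))) *
                S k H (S k H (rx.right q)))) := by
          calc ∑ i ∈ ra.index, ∑ p ∈ (r1 i).index, ∑ q ∈ rx.index,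
              ((r1 i).left p * rx.left q) ⊗ₜ[k]
                ((y * S k H (ra.right i)) * S k H (S k H ((r1 i).right p * rx.right q)))
              = ∑ i ∈ ra.index, ∑ q ∈ rx.index, ∑ p ∈ (r1 i).index,
                ((r1 i).left p * rx.left q) ⊗ₜ[k]
                  ((y * S k H (ra.right i)) * S k H (S k H ((r1 i).right p * rx.right q))) :=
                Finset.sum_congr rfl fun i _ => Finset.sum_comm
            _ = ∑ q ∈ rx.index, ∑ i ∈ ra.index, ∑ p ∈ (r1 i).index,
                ((r1 i).left p * rx.left q) ⊗ₜ[k]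
                  ((y * S k H (ra.right i)) * S k H (S k H ((r1 i).right p * rx.right q))) :=
                Finset.sum_comm
            _ = _ := by
                refine Finset.sum_congr rfl fun q _ => Finset.sum_congr rfl fun i _ =>
                  Finset.sum_congr rfl fun p _ => ?_
                congr 1
                rw [S_mul ((r1 i).right p) (rx.right q), S_mul]
                rw [mul_assoc y (S k H (ra.right i)) _, ← mul_assoc (S k H (ra.right i))]
      _ = ∑ q ∈ rx.index, (a * rx.left q) ⊗ₜ[k] (y * S k H (S k H (rx.right q))) := by
          refine Finset.sum_congr rfl fun q _ => ?_
          have h := congrArg (TensorProduct.map (LinearMap.mulRight k (rx.left q))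
            ((LinearMap.mulLeft k y) ∘ₗ (LinearMap.mulRight k (S k H (S k H (rx.right q))))))
            (E3 ra r1 r2)
          simp only [map_sum, map_tmul, LinearMap.coe_comp, Function.comp_apply,
            LinearMap.mulRight_apply, LinearMap.mulLeft_apply, one_mul] at h
          exact h

lemma part3 (m c : H ⊗[k] H) :
    φ k H (ractSrc k H (m ⊗ₜ c)) = ractTgt k H (φ k H m ⊗ₜ c) := by
  induction m using TensorProduct.induction_on with
  | zero => simp [zero_tmul]
  | add u v hu hv => simp only [add_tmul, map_add] at hu hv ⊢; rw [hu, hv]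
  | tmul x y =>
    induction c using TensorProduct.induction_on with
    | zero => simp [tmul_zero]
    | add u v hu hv => simp only [tmul_add, map_add] at hu hv ⊢; rw [hu, hv]
    | tmul a b =>
      have rx := Coalgebra.Repr.arbitrary k x
      have ra := Coalgebra.Repr.arbitrary k a
      have hrhs : ractTgt k H (φ k H (x ⊗ₜ y) ⊗ₜ (a ⊗ₜ b)) =
          ∑ p ∈ rx.index, ∑ q ∈ ra.index,
            (rx.left p * ra.left q) ⊗ₜ[k]
              ((b * (y * S k H (S k H (rx.right p)))) * S k H (S k H (ra.right q))) := by
        rw [φ_tmul x y rx, sum_tmul, map_sum]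
        exact Finset.sum_congr rfl fun p _ => ractTgt_tmul _ _ _ _ ra
      rw [hrhs, ractSrc_tmul, φ_tmul _ _ (reprMul rx ra)]
      rw [show (reprMul rx ra).index = rx.index ×ˢ ra.index from rfl, Finset.sum_product]
      refine Finset.sum_congr rfl fun p _ => Finset.sum_congr rfl fun q _ => ?_
      show (rx.left p * ra.left q) ⊗ₜ[k]
          ((b * y) * S k H (S k H (rx.right p * ra.right q))) = _
      congr 1
      rw [S_mul (rx.right p) (ra.right q), S_mul]
      simp only [mul_assoc]


end Aux

/-- `φ : L(H^e) → H⊗H` is an isomorphism of `H`-`H^e`-bimodules with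
inverse `ψ`. -/
theorem stmt0 :
    (ψ k H ∘ₗ φ k H = LinearMap.id ∧ φ k H ∘ₗ ψ k H = LinearMap.id) ∧
    (∀ (a : H) (m : H ⊗[k] H), φ k H (lactSrc k H (a ⊗ₜ m)) = lactTgt k H (a ⊗ₜ φ k H m)) ∧
    (∀ (m c : H ⊗[k] H), φ k H (ractSrc k H (m ⊗ₜ c)) = ractTgt k H (φ k H m ⊗ₜ c)) :=
  ⟨⟨part1a, part1b⟩, part2, part3⟩

end Stmt0

end
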